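/- Suppose 2 ≤ k ≤ n are integers. A surjective function f : V(P_n) → {1,...,k} is a k-color weak maximizer of the Wiener index W on P_n if and only if it is a k-color local weak maximizer of W on P_n. -/

import Mathlib

open SimpleGraph Finset

/-- The cycle graph on vertex set `ZMod n`, with an edge between `i` and `i+1` (mod `n`). -/
def cycleGraphZMod (n : ℕ) : SimpleGraph (ZMod n) :=
  SimpleGraph.fromRel (fun u v => v = u + 1)

/-- The Wiener index of a set of vertices: the sum of all pairwise geodesic distances. -/
noncomputable def wienerSet {V : Type*} [Fintype V] [DecidableEq V]
    (G : SimpleGraph V) (A : Finset V) : ℕ :=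
  (∑ p ∈ A.offDiag, G.dist p.1 p.2) / 2

/-- `A` is a maximizer of `W` on `G`. -/
def IsWienerMaximizer {V : Type*} [Fintype V] [DecidableEq V]
    (G : SimpleGraph V) (A : Finset V) : Prop :=
  ∀ B : Finset V, B.card = A.card → wienerSet G B ≤ wienerSet G A

/-- `A ⊆ V(C_n)` is almost good. -/
def AlmostGood (n : ℕ) (A : Finset (ZMod n)) : Prop :=
  A.card = 1 ∨ A.card = n - 1 ∨
    ∃ c₁ c₂ : ((cycleGraphZMod n).induce (↑A : Set (ZMod n))).ConnectedComponent,
      c₁ ≠ c₂ ∧ (∀ c, c = c₁ ∨ c = c₂) ∧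
      (c₁.supp.ncard : ℤ) - (c₂.supp.ncard : ℤ) ≤ 1 ∧
      (c₂.supp.ncard : ℤ) - (c₁.supp.ncard : ℤ) ≤ 1

/-- `A ⊆ V(C_n)` is good: both `A` and its complement are almost good. -/
def GoodSet (n : ℕ) [NeZero n] (A : Finset (ZMod n)) : Prop :=
  AlmostGood n A ∧ AlmostGood n (Finset.univ \ A)

/-- The color class of color `i` for the coloring `f`. -/
def colorClass {V : Type*} [Fintype V] {k : ℕ} (f : V → Fin k) (i : Fin k) : Finset V :=
  Finset.univ.filter (fun v => f v = i)

/-- The Wiener index of a coloring: the sum of the Wiener indices of its color classes. -/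
noncomputable def wienerColoring {V : Type*} [Fintype V] [DecidableEq V] {k : ℕ}
    (G : SimpleGraph V) (f : V → Fin k) : ℕ :=
  ∑ i : Fin k, wienerSet G (colorClass f i)

/-- The type of a coloring, as the multiset of cardinalities of its color classes
(equality of multisets is equality of the nondecreasing rearrangements). -/
def colorType {V : Type*} [Fintype V] {k : ℕ} (f : V → Fin k) : Multiset ℕ :=
  (Finset.univ : Finset (Fin k)).val.map (fun i => (colorClass f i).card)

/-- `f` is a `k`-color weak maximizer of `W` on `G`. -/
def IsWeakMaximizer {V : Type*} [Fintype V] [DecidableEq V] {k : ℕ}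
    (G : SimpleGraph V) (f : V → Fin k) : Prop :=
  Function.Surjective f ∧ ∀ g : V → Fin k, Function.Surjective g →
    colorType g = colorType f → wienerColoring G g ≤ wienerColoring G f

/-- The coloring obtained from `f` by swapping the colors of `u` and `v`. -/
def swapColors {V α : Type*} [DecidableEq V] (f : V → α) (u v : V) : V → α :=
  f ∘ Equiv.swap u v

/-- `f` is a `k`-color local weak maximizer of `W` on `G`. -/
def IsLocalWeakMaximizer {V : Type*} [Fintype V] [DecidableEq V] {k : ℕ}
    (G : SimpleGraph V) (f : V → Fin k) : Prop :=
  Function.Surjective f ∧ ∀ u v : V, G.Adj u v →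
    wienerColoring G (swapColors f u v) ≤ wienerColoring G f

/-- The number of vertices to the left of `u` in the path that get the same color as `u`. -/
def leftCount {n k : ℕ} (f : Fin n → Fin k) (u : Fin n) : ℕ :=
  (Finset.univ.filter (fun w => w < u ∧ f w = f u)).card

/-- The number of vertices to the right of `u` in the path that get the same color as `u`. -/
def rightCount {n k : ℕ} (f : Fin n → Fin k) (u : Fin n) : ℕ :=
  (Finset.univ.filter (fun w => u < w ∧ f w = f u)).card

/-- The sum of the `j` largest entries of a multiset of naturals. -/
def sumLargest (s : Multiset ℕ) (j : ℕ) : ℕ :=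
  (((s.sort (· ≤ ·)).reverse).take j).sum

/-- `x ≺ y` : `x` is majorized by `y`. -/
def MajorizedBy (x y : Multiset ℕ) : Prop :=
  x.card = y.card ∧ x.sum = y.sum ∧ ∀ j, sumLargest x j ≤ sumLargest y j

/-- The reverse Robin Hood transfer `R_{j,j'}` applied to the (sorted) list `t`,
with `j ≤ j'` zero-indexed: subtract `1` from the `j`-th entry and add `1` to the `j'`-th
entry; the result is recorded as a multiset (i.e. up to rearrangement). -/
def rhTransfer (t : List ℕ) (j j' : ℕ) : Multiset ℕ :=
  ↑((t.set j (t.getD j 0 - 1)).set j' ((t.set j (t.getD j 0 - 1)).getD j' 0 + 1))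

/-- `t(n,k)` : the unique nondecreasing `k`-tuple of positive integers summing to `n`
whose entries pairwise differ by at most one, as a multiset. -/
def equitableType (n k : ℕ) : Multiset ℕ :=
  Multiset.replicate (k - n % k) (n / k) + Multiset.replicate (n % k) (n / k + 1)

/-- One step of the operation `R`: `s ∈ R({t})`, i.e. `s = t` or `s` is obtained from `t` by
a reverse Robin Hood transfer between two entries that are equal and even. -/
def REstep (t s : Multiset ℕ) : Prop :=
  s = t ∨ ∃ m : ℕ, Even m ∧ 2 ≤ t.count m ∧
    s = (t - Multiset.replicate 2 m) + {m - 1, m + 1}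

/-- `s ∈ R^∞({t(n,k)})`. -/
def InRInfty (n k : ℕ) (s : Multiset ℕ) : Prop :=
  Relation.ReflTransGen REstep (equitableType n k) s

open SimpleGraph Finset

lemma walk_len_ge {n : ℕ} {u v : Fin n} (w : (pathGraph n).Walk u v) :
    v.val ≤ u.val + w.length ∧ u.val ≤ v.val + w.length := by
  induction w with
  | nil => omega
  | cons h p ih =>
    rw [pathGraph_adj] at h
    simp only [SimpleGraph.Walk.length_cons]
    omega

lemma path_dist_le {n : ℕ} : ∀ (d : ℕ) (u v : Fin n), u.val + d = v.val →
    (pathGraph n).dist u v ≤ d := by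
  intro d
  induction d with
  | zero => intro u v h; have : u = v := Fin.ext (by omega); simp [this]
  | succ d ih =>
    intro u v h
    have hu' : u.val + 1 < n := by omega
    set u' : Fin n := ⟨u.val + 1, by omega⟩ with hu'def
    have hadj : (pathGraph n).Adj u u' := pathGraph_adj.mpr (Or.inl rfl)
    have hc : (pathGraph n).Connected := @SimpleGraph.Connected.mk _ (pathGraph n) (pathGraph_preconnected n) ⟨u⟩
    calc (pathGraph n).dist u v ≤ (pathGraph n).dist u u' + (pathGraph n).dist u' v :=
          hc.dist_triangle
      _ ≤ 1 + d := by
          gcongr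
          · exact le_trans (SimpleGraph.dist_le hadj.toWalk) (by simp)
          · exact ih u' v (by simp [hu'def]; omega)
      _ = d + 1 := by omega

lemma path_dist_eq {n : ℕ} {u v : Fin n} (h : u < v) :
    (pathGraph n).dist u v = v.val - u.val := by
  have hle : (pathGraph n).dist u v ≤ v.val - u.val :=
    path_dist_le _ u v (by omega)
  have hr : (pathGraph n).Reachable u v := (pathGraph_preconnected n) u v
  obtain ⟨w, hw⟩ := hr.exists_walk_length_eq_dist
  have := walk_len_ge w
  omega
open SimpleGraph Finset

lemma wienerSet_path {n : ℕ} (A : Finset (Fin n)) :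
    ((∑ p ∈ A.offDiag, (pathGraph n).dist p.1 p.2) / 2 : ℕ)
      = ∑ a ∈ A, ∑ b ∈ A.filter (· < a), (a.val - b.val) := by
  set S := ∑ a ∈ A, ∑ b ∈ A.filter (· < a), (a.val - b.val) with hS
  have key : ∑ p ∈ A.offDiag, (pathGraph n).dist p.1 p.2 = 2 * S := by
    have h1 : ∑ p ∈ A.offDiag, (pathGraph n).dist p.1 p.2
        = ∑ a ∈ A, ∑ b ∈ A, (if b ≠ a then (pathGraph n).dist a b else 0) := by
      rw [show A.offDiag = (A ×ˢ A).filter (fun a => a.1 ≠ a.2) by ext x; simp [Finset.mem_offDiag, and_assoc],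
        Finset.sum_filter, Finset.sum_product]
      simp [ne_comm]
    have h2 : ∀ a ∈ A, ∀ b ∈ A, (if b ≠ a then (pathGraph n).dist a b else 0)
        = (if b < a then a.val - b.val else 0) + (if a < b then b.val - a.val else 0) := by
      intro a _ b _
      rcases lt_trichotomy a b with h | h | h
      · rw [if_pos h.ne', if_neg (asymm h), if_pos h, path_dist_eq h]; omega
      · simp [h]
      · rw [if_pos h.ne, if_pos h, if_neg (asymm h), SimpleGraph.dist_comm,
          path_dist_eq h]; omega
    rw [h1, Finset.sum_congr rfl (fun a ha => Finset.sum_congr rfl (h2 a ha))]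
    have h3 : ∑ a ∈ A, ∑ b ∈ A, (if b < a then a.val - b.val else 0) = S := by
      rw [hS]
      exact Finset.sum_congr rfl fun a _ => (Finset.sum_filter _ _).symm
    have h4 : ∑ a ∈ A, ∑ b ∈ A, (if a < b then b.val - a.val else 0) = S := by
      rw [Finset.sum_comm, hS]
      exact Finset.sum_congr rfl fun a _ => (Finset.sum_filter _ _).symm
    simp only [Finset.sum_add_distrib, h3, h4]
    omega
  omega

lemma wienerSet_path_int {n : ℕ} (A : Finset (Fin n)) :
    (((∑ p ∈ A.offDiag, (pathGraph n).dist p.1 p.2) / 2 : ℕ) : ℤ)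
      = ∑ a ∈ A, (((A.filter (· < a)).card : ℤ) - ((A.filter (fun b => a < b)).card : ℤ))
          * (a.val : ℤ) := by
  rw [wienerSet_path]
  push_cast
  have h1 : ∀ a ∈ A, (∑ b ∈ A.filter (· < a), ((a.val - b.val : ℕ) : ℤ))
      = ∑ b ∈ A.filter (· < a), ((a.val : ℤ) - (b.val : ℤ)) := by
    intro a _
    refine Finset.sum_congr rfl fun b hb => ?_
    have : b < a := (Finset.mem_filter.mp hb).2
    have : b.val ≤ a.val := le_of_lt this
    omega
  rw [Finset.sum_congr rfl h1]
  have h2 : ∀ a ∈ A, ∑ b ∈ A.filter (· < a), ((a.val : ℤ) - (b.val : ℤ))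
      = ((A.filter (· < a)).card : ℤ) * a.val - ∑ b ∈ A.filter (· < a), (b.val : ℤ) := by
    intro a _
    rw [Finset.sum_sub_distrib, Finset.sum_const, nsmul_eq_mul]
  rw [Finset.sum_congr rfl h2, Finset.sum_sub_distrib]
  have h3 : ∑ a ∈ A, ∑ b ∈ A.filter (· < a), (b.val : ℤ)
      = ∑ b ∈ A, ((A.filter (fun c => b < c)).card : ℤ) * b.val := by
    have : ∀ a ∈ A, ∑ b ∈ A.filter (· < a), (b.val : ℤ)
        = ∑ b ∈ A, (if b < a then (b.val : ℤ) else 0) :=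
      fun a _ => Finset.sum_filter _ _
    rw [Finset.sum_congr rfl this, Finset.sum_comm]
    refine Finset.sum_congr rfl fun b _ => ?_
    rw [← Finset.sum_filter, Finset.sum_const, nsmul_eq_mul]
  rw [h3]
  rw [← Finset.sum_sub_distrib]
  exact Finset.sum_congr rfl fun a _ => by ring

def delta {n k : ℕ} (f : Fin n → Fin k) (v : Fin n) : ℤ :=
  (leftCount f v : ℤ) - (rightCount f v : ℤ)

lemma wienerColoring_path {n k : ℕ} (f : Fin n → Fin k) :
    (wienerColoring (pathGraph n) f : ℤ) = ∑ v, delta f v * (v.val : ℤ) := by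
  unfold wienerColoring wienerSet
  rw [Nat.cast_sum]
  have h1 : ∀ i : Fin k,
      (((∑ p ∈ (colorClass f i).offDiag, (pathGraph n).dist p.1 p.2) / 2 : ℕ) : ℤ)
        = ∑ a ∈ colorClass f i, delta f a * (a.val : ℤ) := by
    intro i
    rw [wienerSet_path_int]
    refine Finset.sum_congr rfl fun a ha => ?_
    have hfa : f a = i := (Finset.mem_filter.mp ha).2
    have hL : (colorClass f i).filter (· < a) = Finset.univ.filter (fun w => w < a ∧ f w = f a) := by
      ext w
      simp only [colorClass, Finset.mem_filter, Finset.mem_univ, true_and, hfa]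
      tauto
    have hR : (colorClass f i).filter (fun b => a < b)
        = Finset.univ.filter (fun w => a < w ∧ f w = f a) := by
      ext w
      simp only [colorClass, Finset.mem_filter, Finset.mem_univ, true_and, hfa]
      tauto
    rw [hL, hR]
    rfl
  rw [Finset.sum_congr rfl fun i _ => h1 i]
  exact Finset.sum_fiberwise _ _ _

lemma card_filter_comp_perm {V : Type*} [Fintype V] [DecidableEq V] (σ : Equiv.Perm V)
    (Q : V → Prop) [DecidablePred Q] :
    (Finset.univ.filter fun x => Q (σ x)).card = (Finset.univ.filter Q).card := by
  rw [← Finset.card_image_of_injective (Finset.univ.filter fun x => Q (σ x)) σ.injective]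
  congr 1
  ext y
  simp only [Finset.mem_image, Finset.mem_filter, Finset.mem_univ, true_and]
  constructor
  · rintro ⟨x, hx, rfl⟩; exact hx
  · intro hy; exact ⟨σ.symm y, by simpa using hy, by simp⟩

section Swap
variable {n k : ℕ} {f : Fin n → Fin k} {u v : Fin n}

lemma delta_swap_of_ne (huv : u.val + 1 = v.val) {w : Fin n} (hwu : w ≠ u) (hwv : w ≠ v) :
    delta (swapColors f u v) w = delta f w := by
  have hw1 : w.val ≠ u.val := fun h => hwu (Fin.ext h)
  have hw2 : w.val ≠ v.val := fun h => hwv (Fin.ext h)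
  have hval : ∀ y : Fin n, ((Equiv.swap u v y).val < w.val ↔ y.val < w.val) ∧
      (w.val < (Equiv.swap u v y).val ↔ w.val < y.val) := by
    intro y
    rcases eq_or_ne y u with rfl | hyu
    · rw [Equiv.swap_apply_left]; omega
    rcases eq_or_ne y v with rfl | hyv
    · rw [Equiv.swap_apply_right]; omega
    · rw [Equiv.swap_apply_of_ne_of_ne hyu hyv]; omega
  unfold delta leftCount rightCount
  have hL : (Finset.univ.filter fun x => x < w ∧ swapColors f u v x = swapColors f u v w)
      = (Finset.univ.filter fun x =>
          (fun y => Equiv.swap u v y < w ∧ f y = f w) (Equiv.swap u v x)) := by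
    apply Finset.filter_congr
    intro x _
    simp only [Equiv.swap_apply_self, swapColors, Function.comp_apply,
      Equiv.swap_apply_of_ne_of_ne hwu hwv]
  have hR : (Finset.univ.filter fun x => w < x ∧ swapColors f u v x = swapColors f u v w)
      = (Finset.univ.filter fun x =>
          (fun y => w < Equiv.swap u v y ∧ f y = f w) (Equiv.swap u v x)) := by
    apply Finset.filter_congr
    intro x _
    simp only [Equiv.swap_apply_self, swapColors, Function.comp_apply,
      Equiv.swap_apply_of_ne_of_ne hwu hwv]
  have cL : (Finset.univ.filter fun x => x < w ∧ swapColors f u v x = swapColors f u v w).card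
      = (Finset.univ.filter fun y => Equiv.swap u v y < w ∧ f y = f w).card := by
    rw [hL]
    exact card_filter_comp_perm (Equiv.swap u v) (fun y => Equiv.swap u v y < w ∧ f y = f w)
  have cR : (Finset.univ.filter fun x => w < x ∧ swapColors f u v x = swapColors f u v w).card
      = (Finset.univ.filter fun y => w < Equiv.swap u v y ∧ f y = f w).card := by
    rw [hR]
    exact card_filter_comp_perm (Equiv.swap u v) (fun y => w < Equiv.swap u v y ∧ f y = f w)
  rw [cL, cR]
  have hL2 : (Finset.univ.filter fun y => Equiv.swap u v y < w ∧ f y = f w)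
      = (Finset.univ.filter fun y => y < w ∧ f y = f w) := by
    apply Finset.filter_congr
    intro y _
    rw [Fin.lt_def, Fin.lt_def, (hval y).1]
  have hR2 : (Finset.univ.filter fun y => w < Equiv.swap u v y ∧ f y = f w)
      = (Finset.univ.filter fun y => w < y ∧ f y = f w) := by
    apply Finset.filter_congr
    intro y _
    rw [Fin.lt_def, Fin.lt_def, (hval y).2]
  rw [hL2, hR2]

lemma delta_swap_left (huv : u.val + 1 = v.val) (hne : f u ≠ f v) :
    delta (swapColors f u v) u = delta f v := by
  have hu : swapColors f u v u = f v := by simp [swapColors]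
  have hv : swapColors f u v v = f u := by simp [swapColors]
  unfold delta leftCount rightCount
  rw [hu]
  have hL : (Finset.univ.filter fun x => x < u ∧ swapColors f u v x = f v)
      = (Finset.univ.filter fun x => x < v ∧ f x = f v) := by
    apply Finset.filter_congr
    intro x _
    rcases eq_or_ne x u with heq | hxu
    · subst heq
      exact iff_of_false (fun h => absurd h.1 (lt_irrefl x)) (fun h => hne h.2)
    rcases eq_or_ne x v with heq | hxv
    · subst heq
      refine iff_of_false ?_ ?_ <;> rintro ⟨h1, -⟩ <;> rw [Fin.lt_def] at h1 <;> omega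
    · rw [show swapColors f u v x = f x by
        simp [swapColors, Equiv.swap_apply_of_ne_of_ne hxu hxv]]
      have h1 : x.val ≠ u.val := fun h => hxu (Fin.ext h)
      apply and_congr_left'
      rw [Fin.lt_def, Fin.lt_def]
      omega
  have hR : (Finset.univ.filter fun x => u < x ∧ swapColors f u v x = f v)
      = (Finset.univ.filter fun x => v < x ∧ f x = f v) := by
    apply Finset.filter_congr
    intro x _
    rcases eq_or_ne x u with heq | hxu
    · subst heq
      exact iff_of_false (fun h => absurd h.1 (lt_irrefl x))
        (fun h => absurd h.1 (by rw [Fin.lt_def]; omega))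
    rcases eq_or_ne x v with heq | hxv
    · subst heq
      refine iff_of_false ?_ (fun h => absurd h.1 (lt_irrefl x))
      rintro ⟨-, h2⟩; rw [hv] at h2; exact hne h2
    · rw [show swapColors f u v x = f x by
        simp [swapColors, Equiv.swap_apply_of_ne_of_ne hxu hxv]]
      have h1 : x.val ≠ v.val := fun h => hxv (Fin.ext h)
      apply and_congr_left'
      rw [Fin.lt_def, Fin.lt_def]
      omega
  rw [hL, hR]

lemma delta_swap_right (huv : u.val + 1 = v.val) (hne : f u ≠ f v) :
    delta (swapColors f u v) v = delta f u := by
  have hu : swapColors f u v u = f v := by simp [swapColors]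
  have hv : swapColors f u v v = f u := by simp [swapColors]
  unfold delta leftCount rightCount
  rw [hv]
  have hL : (Finset.univ.filter fun x => x < v ∧ swapColors f u v x = f u)
      = (Finset.univ.filter fun x => x < u ∧ f x = f u) := by
    apply Finset.filter_congr
    intro x _
    rcases eq_or_ne x u with heq | hxu
    · subst heq
      refine iff_of_false ?_ (fun h => absurd h.1 (lt_irrefl x))
      rintro ⟨-, h2⟩; rw [hu] at h2; exact hne h2.symm
    rcases eq_or_ne x v with heq | hxv
    · subst heq
      exact iff_of_false (fun h => absurd h.1 (lt_irrefl x))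
        (fun h => absurd h.1 (by rw [Fin.lt_def]; omega))
    · rw [show swapColors f u v x = f x by
        simp [swapColors, Equiv.swap_apply_of_ne_of_ne hxu hxv]]
      have h1 : x.val ≠ u.val := fun h => hxu (Fin.ext h)
      have h2 : x.val ≠ v.val := fun h => hxv (Fin.ext h)
      apply and_congr_left'
      rw [Fin.lt_def, Fin.lt_def]
      omega
  have hR : (Finset.univ.filter fun x => v < x ∧ swapColors f u v x = f u)
      = (Finset.univ.filter fun x => u < x ∧ f x = f u) := by
    apply Finset.filter_congr
    intro x _
    rcases eq_or_ne x u with heq | hxu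
    · subst heq
      refine iff_of_false ?_ (fun h => absurd h.1 (lt_irrefl x))
      rintro ⟨h1, -⟩; rw [Fin.lt_def] at h1; omega
    rcases eq_or_ne x v with heq | hxv
    · subst heq
      exact iff_of_false (fun h => absurd h.1 (lt_irrefl x)) (fun h => hne h.2.symm)
    · rw [show swapColors f u v x = f x by
        simp [swapColors, Equiv.swap_apply_of_ne_of_ne hxu hxv]]
      have h2 : x.val ≠ v.val := fun h => hxv (Fin.ext h)
      apply and_congr_left'
      rw [Fin.lt_def, Fin.lt_def]
      omega
  rw [hL, hR]

lemma delta_succ_of_eq (huv : u.val + 1 = v.val) (heq : f u = f v) :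
    delta f v = delta f u + 2 := by
  have hL : (Finset.univ.filter fun x => x < v ∧ f x = f v)
      = insert u (Finset.univ.filter fun x => x < u ∧ f x = f u) := by
    ext x
    simp only [Finset.mem_insert, Finset.mem_filter, Finset.mem_univ, true_and, Fin.lt_def]
    constructor
    · rintro ⟨h1, h2⟩
      rcases eq_or_ne x u with heq' | hxu
      · exact Or.inl heq'
      · exact Or.inr ⟨by have := fun h => hxu (Fin.ext h); omega, by rw [h2, heq]⟩
    · rintro (heq' | ⟨h1, h2⟩)
      · subst heq'; exact ⟨by omega, heq⟩
      · exact ⟨by omega, by rw [h2, heq]⟩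
  have hR : (Finset.univ.filter fun x => u < x ∧ f x = f u)
      = insert v (Finset.univ.filter fun x => v < x ∧ f x = f v) := by
    ext x
    simp only [Finset.mem_insert, Finset.mem_filter, Finset.mem_univ, true_and, Fin.lt_def]
    constructor
    · rintro ⟨h1, h2⟩
      rcases eq_or_ne x v with heq' | hxv
      · exact Or.inl heq'
      · exact Or.inr ⟨by have := fun h => hxv (Fin.ext h); omega, by rw [h2, heq]⟩
    · rintro (heq' | ⟨h1, h2⟩)
      · subst heq'; exact ⟨by omega, heq.symm⟩
      · exact ⟨by omega, by rw [h2, heq]⟩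
  have hu_notmem : u ∉ (Finset.univ.filter fun x => x < u ∧ f x = f u) := by
    simp
  have hv_notmem : v ∉ (Finset.univ.filter fun x => v < x ∧ f x = f v) := by
    simp
  unfold delta leftCount rightCount
  rw [hL, hR, Finset.card_insert_of_notMem hu_notmem, Finset.card_insert_of_notMem hv_notmem]
  push_cast
  ring

end Swap

section Mono
variable {n k : ℕ} {f : Fin n → Fin k}

lemma wiener_swap_diff {u v : Fin n} (huv : u.val + 1 = v.val) (hne : f u ≠ f v) :
    (wienerColoring (SimpleGraph.pathGraph n) (swapColors f u v) : ℤ)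
      - (wienerColoring (SimpleGraph.pathGraph n) f : ℤ) = delta f u - delta f v := by
  have huv' : u ≠ v := fun h => by rw [h] at huv; omega
  rw [wienerColoring_path, wienerColoring_path, ← Finset.sum_sub_distrib]
  have hzero : ∀ x ∈ (Finset.univ : Finset (Fin n)), x ∉ ({u, v} : Finset (Fin n)) →
      delta (swapColors f u v) x * (x.val : ℤ) - delta f x * (x.val : ℤ) = 0 := by
    intro x _ hx
    simp only [Finset.mem_insert, Finset.mem_singleton, not_or] at hx
    rw [delta_swap_of_ne huv hx.1 hx.2]
    ring
  rw [← Finset.sum_subset (Finset.subset_univ ({u, v} : Finset (Fin n))) hzero,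
    Finset.sum_pair huv', delta_swap_left huv hne, delta_swap_right huv hne]
  have hval : ((v.val : ℕ) : ℤ) = (u.val : ℤ) + 1 := by exact_mod_cast huv.symm
  rw [hval]
  ring

lemma delta_step (hloc : IsLocalWeakMaximizer (SimpleGraph.pathGraph n) f)
    {u v : Fin n} (huv : u.val + 1 = v.val) : delta f u ≤ delta f v := by
  rcases eq_or_ne (f u) (f v) with heq | hne
  · rw [delta_succ_of_eq huv heq]; omega
  · have hadj : (SimpleGraph.pathGraph n).Adj u v := pathGraph_adj.mpr (Or.inl huv)
    have hW := hloc.2 u v hadj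
    have hWz : (wienerColoring (SimpleGraph.pathGraph n) (swapColors f u v) : ℤ)
        ≤ (wienerColoring (SimpleGraph.pathGraph n) f : ℤ) := by exact_mod_cast hW
    have := wiener_swap_diff huv hne
    omega

lemma delta_mono (hloc : IsLocalWeakMaximizer (SimpleGraph.pathGraph n) f) :
    ∀ (d : ℕ) (u v : Fin n), u.val + d = v.val → delta f u ≤ delta f v := by
  intro d
  induction d with
  | zero => intro u v h; have : u = v := Fin.ext (by omega); rw [this]
  | succ d ih =>
    intro u v h
    have hu' : u.val + 1 < n := by omega
    set u' : Fin n := ⟨u.val + 1, by omega⟩ with hu'def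
    exact le_trans (delta_step hloc (v := u') rfl) (ih u' v (by simp [hu'def]; omega))

lemma delta_monovary (hloc : IsLocalWeakMaximizer (SimpleGraph.pathGraph n) f) :
    Monovary (delta f) (fun v : Fin n => (v.val : ℤ)) := by
  intro i j hij
  simp only at hij
  exact delta_mono hloc (j.val - i.val) i j (by omega)

end Mono

section MultisetEq
variable {n k : ℕ}

lemma count_sum_one {f : Fin n → Fin k} (v : Fin n) :
    leftCount f v + rightCount f v + 1 = (colorClass f (f v)).card := by
  classical
  have e : colorClass f (f v)
      = ((Finset.univ.filter fun w => w < v ∧ f w = f v)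
          ∪ (Finset.univ.filter fun w => v < w ∧ f w = f v)) ∪ {v} := by
    ext w
    simp only [colorClass, Finset.mem_filter, Finset.mem_univ, true_and, Finset.mem_union,
      Finset.mem_singleton]
    constructor
    · intro hw
      rcases lt_trichotomy w v with h | h | h
      · exact Or.inl (Or.inl ⟨h, hw⟩)
      · exact Or.inr h
      · exact Or.inl (Or.inr ⟨h, hw⟩)
    · rintro ((⟨-, h⟩ | ⟨-, h⟩) | h)
      · exact h
      · exact h
      · rw [h]
  have d1 : Disjoint (Finset.univ.filter fun w => w < v ∧ f w = f v)
      (Finset.univ.filter fun w => v < w ∧ f w = f v) := by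
    rw [Finset.disjoint_left]
    intro a ha hb
    simp only [Finset.mem_filter] at ha hb
    exact absurd (ha.2.1.trans hb.2.1) (lt_irrefl a)
  have d2 : Disjoint ((Finset.univ.filter fun w => w < v ∧ f w = f v)
      ∪ (Finset.univ.filter fun w => v < w ∧ f w = f v)) ({v} : Finset (Fin n)) := by
    rw [Finset.disjoint_right]
    intro a ha hb
    simp only [Finset.mem_singleton] at ha
    subst ha
    simp only [Finset.mem_union, Finset.mem_filter, lt_irrefl, false_and] at hb
    tauto
  rw [e, Finset.card_union_of_disjoint d2, Finset.card_union_of_disjoint d1]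
  simp [leftCount, rightCount]

lemma delta_eq_of_left {f : Fin n → Fin k} (v : Fin n) :
    delta f v = 2 * (leftCount f v : ℤ) - ((colorClass f (f v)).card : ℤ) + 1 := by
  have := count_sum_one (f := f) v
  unfold delta
  omega

/-- the multiset of `delta`-values within a class of size `m` -/
def deltaPattern (m : ℕ) : Multiset ℤ :=
  (Multiset.range m).map (fun j : ℕ => 2 * (j : ℤ) - (m : ℤ) + 1)

lemma class_map_delta {f : Fin n → Fin k} (i : Fin k) :
    (colorClass f i).val.map (delta f) = deltaPattern ((colorClass f i).card) := by
  classical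
  set A := colorClass f i with hA
  set m := A.card with hm
  have hcolor : ∀ a ∈ A, f a = i := fun a ha => (Finset.mem_filter.mp ha).2
  have hmono : ∀ a ∈ A, ∀ b ∈ A, a < b → leftCount f a < leftCount f b := by
    intro a ha b hb hab
    apply Finset.card_lt_card
    rw [Finset.ssubset_iff_of_subset]
    · exact ⟨a, by simp [hab, hcolor a ha, hcolor b hb], by simp⟩
    · intro w hw
      simp only [Finset.mem_filter, Finset.mem_univ, true_and] at hw ⊢
      exact ⟨hw.1.trans hab, by rw [hw.2, hcolor a ha, hcolor b hb]⟩
  have hinj : Set.InjOn (fun v => leftCount f v) A := by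
    intro a ha b hb hab
    by_contra hne
    rcases lt_or_gt_of_ne hne with h | h
    · exact absurd hab (ne_of_lt (hmono a (by simpa using ha) b (by simpa using hb) h))
    · exact absurd hab.symm (ne_of_lt (hmono b (by simpa using hb) a (by simpa using ha) h))
  have hlt : ∀ a ∈ A, leftCount f a < m := by
    intro a ha
    have hsub : (Finset.univ.filter fun w => w < a ∧ f w = f a) ⊆ A.erase a := by
      intro w hw
      simp only [Finset.mem_filter, Finset.mem_univ, true_and] at hw
      refine Finset.mem_erase.mpr ⟨ne_of_lt hw.1, ?_⟩
      rw [hA, colorClass, Finset.mem_filter]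
      exact ⟨Finset.mem_univ w, by rw [hw.2, hcolor a ha]⟩
    calc leftCount f a ≤ (A.erase a).card := Finset.card_le_card hsub
      _ < m := by
          rw [Finset.card_erase_of_mem ha]
          have : 1 ≤ m := Finset.card_pos.mpr ⟨a, ha⟩
          omega
  have himg : A.image (fun v => leftCount f v) = Finset.range m := by
    apply Finset.eq_of_subset_of_card_le
    · intro x hx
      obtain ⟨a, ha, rfl⟩ := Finset.mem_image.mp hx
      exact Finset.mem_range.mpr (hlt a ha)
    · rw [Finset.card_range, Finset.card_image_of_injOn hinj]
  have hmapval : A.val.map (fun v => leftCount f v) = (Multiset.range m) := by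
    rw [← Finset.image_val_of_injOn hinj, himg, Finset.range_val]
  have hdelta : ∀ a ∈ A.val, delta f a
      = (fun j : ℕ => 2 * (j : ℤ) - (m : ℤ) + 1) (leftCount f a) := by
    intro a ha
    have ha' : a ∈ A := ha
    rw [delta_eq_of_left, hcolor a ha', ← hA, ← hm]
  rw [Multiset.map_congr rfl hdelta,
    show (fun x => (fun j : ℕ => 2 * (j : ℤ) - (m : ℤ) + 1) (leftCount f x))
      = (fun j : ℕ => 2 * (j : ℤ) - (m : ℤ) + 1) ∘ (fun v => leftCount f v) from rfl,
    ← Multiset.map_map, hmapval, deltaPattern]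

lemma univ_val_eq_sum_classes (f : Fin n → Fin k) :
    (Finset.univ : Finset (Fin n)).val = ∑ i : Fin k, (colorClass f i).val := by
  classical
  calc (Finset.univ : Finset (Fin n)).val
      = ∑ v ∈ Finset.univ, ({v} : Multiset (Fin n)) := (Finset.sum_multiset_singleton _).symm
    _ = ∑ i : Fin k, ∑ v ∈ Finset.univ.filter (fun v => f v = i), ({v} : Multiset (Fin n)) :=
        (Finset.sum_fiberwise _ _ _).symm
    _ = ∑ i : Fin k, (colorClass f i).val := by
        refine Finset.sum_congr rfl fun i _ => ?_
        rw [Finset.sum_multiset_singleton]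
        rfl

lemma delta_multiset_eq {f g : Fin n → Fin k} (hct : colorType g = colorType f) :
    (Finset.univ : Finset (Fin n)).val.map (delta g)
      = (Finset.univ : Finset (Fin n)).val.map (delta f) := by
  classical
  have key : ∀ h : Fin n → Fin k, (Finset.univ : Finset (Fin n)).val.map (delta h)
      = ((colorType h).map deltaPattern).sum := by
    intro h
    rw [univ_val_eq_sum_classes h]
    have h2 := map_sum (Multiset.mapAddMonoidHom (delta h))
      (fun i => (colorClass h i).val) Finset.univ
    simp only [Multiset.coe_mapAddMonoidHom] at h2
    rw [h2, Finset.sum_congr rfl (fun i _ => class_map_delta i), colorType, Multiset.map_map]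
    rfl
  rw [key f, key g, hct]

end MultisetEq

lemma exists_comp_perm {N : ℕ} (d e : Fin N → ℤ)
    (h : Multiset.map d (Finset.univ : Finset (Fin N)).val
      = Multiset.map e (Finset.univ : Finset (Fin N)).val) :
    ∃ σ : Equiv.Perm (Fin N), ∀ v, d v = e (σ v) := by
  classical
  have hcard : ∀ z : ℤ, Fintype.card {v : Fin N // d v = z} = Fintype.card {v : Fin N // e v = z} := by
    intro z
    have h1 := congrArg (Multiset.count z) h
    rw [Multiset.count_map, Multiset.count_map] at h1
    rw [Fintype.card_subtype, Fintype.card_subtype]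
    simp only [Finset.card, Finset.filter_val]
    convert h1 using 2 <;> (apply Multiset.filter_congr; intro x _; exact eq_comm)
  have E : ∀ z : ℤ, {v : Fin N // d v = z} ≃ {v : Fin N // e v = z} :=
    fun z => Fintype.equivOfCardEq (hcard z)
  let φ : Fin N → Fin N := fun v => (E (d v) ⟨v, rfl⟩).val
  have hφ : ∀ v, e (φ v) = d v := fun v => (E (d v) ⟨v, rfl⟩).prop
  have hinj : Function.Injective φ := by
    intro a b hab
    have hz : d b = d a := by rw [← hφ a, ← hφ b, hab]
    have key : ∀ (w : ℤ) (hw : d b = w), ((E (d b)) ⟨b, rfl⟩).val = ((E w) ⟨b, hw⟩).val := by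
      rintro w rfl; rfl
    have h2 : ((E (d a)) ⟨a, rfl⟩).val = ((E (d a)) ⟨b, hz⟩).val := by
      rw [show ((E (d a)) ⟨a, rfl⟩).val = φ a from rfl, hab]
      exact key (d a) hz
    have h3 : (⟨a, rfl⟩ : {v : Fin N // d v = d a}) = ⟨b, hz⟩ :=
      (E (d a)).injective (Subtype.ext h2)
    exact congrArg Subtype.val h3
  refine ⟨Equiv.ofBijective φ (Finite.injective_iff_bijective.mp hinj), fun v => ?_⟩
  exact (hφ v).symm

lemma colorType_swapColors {n k : ℕ} (f : Fin n → Fin k) (u v : Fin n) :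
    colorType (swapColors f u v) = colorType f := by
  classical
  unfold colorType
  apply Multiset.map_congr rfl
  intro i _
  have : colorClass (swapColors f u v) i = (colorClass f i).image (Equiv.swap u v) := by
    ext w
    simp only [colorClass, Finset.mem_filter, Finset.mem_univ, true_and, Finset.mem_image]
    simp only [swapColors, Function.comp_apply]
    constructor
    · intro hw
      exact ⟨Equiv.swap u v w, hw, Equiv.swap_apply_self _ _ _⟩
    · rintro ⟨x, hx, rfl⟩
      rwa [Equiv.swap_apply_self]
  rw [this, Finset.card_image_of_injective _ (Equiv.swap u v).injective]

/-- For `2 ≤ k ≤ n`, a surjective `f : V(P_n) → {1,…,k}` is a `k`-color weak maximizer of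
`W` on `P_n` iff it is a `k`-color local weak maximizer of `W` on `P_n`. -/
theorem path_weakMaximizer_iff_localWeakMaximizer (n k : ℕ) (hk : 2 ≤ k) (hkn : k ≤ n)
    (f : Fin n → Fin k) (hf : Function.Surjective f) :
    IsWeakMaximizer (SimpleGraph.pathGraph n) f ↔
      IsLocalWeakMaximizer (SimpleGraph.pathGraph n) f := by
  constructor
  · intro hw
    refine ⟨hw.1, fun u v _ => ?_⟩
    exact hw.2 (swapColors f u v) (hw.1.comp (Equiv.swap u v).surjective)
      (colorType_swapColors f u v)
  · intro hloc
    refine ⟨hf, fun g hg hct => ?_⟩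
    have hms := delta_multiset_eq hct
    obtain ⟨σ, hσ⟩ := exists_comp_perm (delta g) (delta f) hms
    have hmv : Monovary (delta f) (fun v : Fin n => (v.val : ℤ)) := delta_monovary hloc
    have hle : (wienerColoring (SimpleGraph.pathGraph n) g : ℤ)
        ≤ (wienerColoring (SimpleGraph.pathGraph n) f : ℤ) := by
      rw [wienerColoring_path, wienerColoring_path]
      calc ∑ v, delta g v * (v.val : ℤ)
          = ∑ v, delta f (σ v) * (v.val : ℤ) := by
            exact Finset.sum_congr rfl fun v _ => by rw [hσ v]
        _ ≤ ∑ v, delta f v * (v.val : ℤ) := by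
            simpa only [smul_eq_mul] using hmv.sum_comp_perm_smul_le_sum_smul (σ := σ)
    exact_mod_cast hle
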